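/- There exists an absolute constant c > 0 such that for every finite Abelian group G with |G| ≥ 2, every integer k ≥ 1 and every tuple z ∈ G^k, the relaxation time of the simple random walk on the undirected Cayley multigraph G^−(z) satisfies t_rel(G^−(z)) ≥ c·|G|^{2/k}; equivalently, the spectral gap satisfies 1 − lambda_2 ≤ c^{−1}·|G|^{−2/k}. In particular also t_rel^*(G^−(z)) ≥ t_rel(G^−(z)) ≥ c·|G|^{2/k}. -/

import Mathlib

/-- Transition matrix of the simple random walk on the undirected Cayley multigraph of the
finite additive Abelian group `G` with generator tuple `z`:
`P(x,y) = (2k)⁻¹·(#{i : y = x + z i} + #{i : y = x − z i})`. -/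
noncomputable def cayP {G : Type*} [AddCommGroup G] [Fintype G] [DecidableEq G] {k : ℕ}
    (z : Fin k → G) (x y : G) : ℝ :=
  (((Finset.univ.filter fun i => y = x + z i).card : ℝ) +
    ((Finset.univ.filter fun i => y = x - z i).card : ℝ)) / (2 * k)

/-- The second-largest eigenvalue `λ₂` of a symmetric stochastic matrix `P` on `G`,
via the variational characterisation over mean-zero functions. -/
noncomputable def lamTwo {G : Type*} [Fintype G] (P : G → G → ℝ) : ℝ :=
  sSup {r : ℝ | ∃ f : G → ℝ, f ≠ 0 ∧ (∑ x, f x) = 0 ∧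
    r = (∑ x, ∑ y, f x * P x y * f y) / (∑ x, (f x) ^ 2)}

/-- The smallest eigenvalue `λ_{|G|}` of a symmetric stochastic matrix `P` on `G`,
via the variational characterisation. -/
noncomputable def lamMin {G : Type*} [Fintype G] (P : G → G → ℝ) : ℝ :=
  sInf {r : ℝ | ∃ f : G → ℝ, f ≠ 0 ∧
    r = (∑ x, ∑ y, f x * P x y * f y) / (∑ x, (f x) ^ 2)}

/-- The spectral gap `γ = 1 − λ₂`. -/
noncomputable def spectralGap {G : Type*} [Fintype G] (P : G → G → ℝ) : ℝ :=
  1 - lamTwo P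

/-- The absolute spectral gap `γ_* = 1 − max{|λ₂|, |λ_{|G|}|}`. -/
noncomputable def absSpectralGap {G : Type*} [Fintype G] (P : G → G → ℝ) : ℝ :=
  1 - max |lamTwo P| |lamMin P|

/-- The relaxation time `t_rel = 1/γ` and absolute relaxation time `t_rel^* = 1/γ_*` satisfy
`t_rel^* ≥ t_rel ≥ c·|G|^{2/k}`; equivalently (and avoiding division conventions),
`γ_* ≤ γ ≤ c⁻¹·|G|^{−2/k}`. -/
lemma sum_card_filter_mul {G : Type*} [Fintype G] [DecidableEq G] {k : ℕ}
    (g : Fin k → G) (f : G → ℝ) :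
    ∑ y : G, ((Finset.univ.filter fun i => y = g i).card : ℝ) * f y = ∑ i, f (g i) := by
  have h : ∀ y : G, ((Finset.univ.filter fun i => y = g i).card : ℝ) * f y
      = ∑ i : Fin k, if y = g i then f y else 0 := fun y => by
    rw [Finset.card_filter]
    push_cast
    rw [Finset.sum_mul]
    exact Finset.sum_congr rfl fun i _ => by split <;> simp
  simp_rw [h]
  rw [Finset.sum_comm]
  refine Finset.sum_congr rfl fun i _ => ?_
  simp

variable {G : Type*} [AddCommGroup G] [Fintype G] [DecidableEq G] {k : ℕ} (z : Fin k → G)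

lemma cayP_nonneg (x y : G) : 0 ≤ cayP z x y := by
  unfold cayP; positivity

lemma cayP_symm (x y : G) : cayP z x y = cayP z y x := by
  unfold cayP
  have h1 : (Finset.univ.filter fun i => y = x + z i)
      = (Finset.univ.filter fun i : Fin k => x = y - z i) := by
    apply Finset.filter_congr; intro i _
    simp only [eq_sub_iff_add_eq]
    constructor
    · intro h; rw [h]
    · intro h; rw [← h]
  have h2 : (Finset.univ.filter fun i => y = x - z i)
      = (Finset.univ.filter fun i : Fin k => x = y + z i) := by
    apply Finset.filter_congr; intro i _
    rw [eq_sub_iff_add_eq]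
    constructor
    · intro h; rw [← h]
    · intro h; rw [h]
  rw [h1, h2, add_comm]

lemma cayP_row (f : G → ℝ) (x : G) :
    ∑ y, cayP z x y * f y = (∑ i, (f (x + z i) + f (x - z i))) / (2 * k) := by
  have h : ∀ y, cayP z x y * f y =
      (((Finset.univ.filter fun i => y = x + z i).card : ℝ) * f y
        + ((Finset.univ.filter fun i => y = x - z i).card : ℝ) * f y) / (2 * k) := fun y => by
    unfold cayP; ring
  simp_rw [h]
  rw [← Finset.sum_div, Finset.sum_add_distrib,
    sum_card_filter_mul (fun i => x + z i) f, sum_card_filter_mul (fun i => x - z i) f,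
    ← Finset.sum_add_distrib]

lemma cayP_rowsum (hk : 1 ≤ k) (x : G) : ∑ y, cayP z x y = 1 := by
  have := cayP_row z (fun _ => 1) x
  simp only [mul_one] at this
  rw [this]
  simp only [Finset.sum_const, Finset.card_univ, Fintype.card_fin]
  have hk' : (k : ℝ) ≠ 0 := Nat.cast_ne_zero.2 (by omega)
  push_cast
  field_simp
  ring

lemma cayP_colsum (hk : 1 ≤ k) (y : G) : ∑ x, cayP z x y = 1 := by
  rw [Finset.sum_congr rfl fun x _ => cayP_symm z x y]
  exact cayP_rowsum z hk y

lemma sum_sq_pos {f : G → ℝ} (hf : f ≠ 0) : 0 < ∑ x, (f x) ^ 2 := by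
  obtain ⟨x, hx⟩ := Function.ne_iff.mp hf
  refine Finset.sum_pos' (fun y _ => sq_nonneg _) ⟨x, Finset.mem_univ _, ?_⟩
  exact pow_pos (abs_pos.mpr hx) 2 |>.trans_eq (by rw [sq_abs])

lemma rayleigh_num_le (hk : 1 ≤ k) (f : G → ℝ) :
    ∑ x, ∑ y, f x * cayP z x y * f y ≤ ∑ x, (f x) ^ 2 := by
  have e1 : ∀ x : G, ∑ y, cayP z x y * ((f x)^2/2) = (f x)^2/2 := fun x => by
    rw [← Finset.sum_mul, cayP_rowsum z hk, one_mul]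
  have e2 : ∀ y : G, ∑ x, cayP z x y * ((f y)^2/2) = (f y)^2/2 := fun y => by
    rw [← Finset.sum_mul, cayP_colsum z hk, one_mul]
  have step1 : ∑ x, ∑ y, f x * cayP z x y * f y
      ≤ ∑ x, ∑ y, (cayP z x y * ((f x)^2/2) + cayP z x y * ((f y)^2/2)) := by
    refine Finset.sum_le_sum fun x _ => Finset.sum_le_sum fun y _ => ?_
    have hP := cayP_nonneg z x y
    nlinarith [mul_le_mul_of_nonneg_left (sq_nonneg (f x - f y)) hP]
  refine step1.trans_eq ?_
  calc ∑ x, ∑ y, (cayP z x y * ((f x)^2/2) + cayP z x y * ((f y)^2/2))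
      = (∑ x, ∑ y, cayP z x y * ((f x)^2/2)) + ∑ x, ∑ y, cayP z x y * ((f y)^2/2) := by
        simp_rw [Finset.sum_add_distrib]
    _ = (∑ x, ∑ y, cayP z x y * ((f x)^2/2)) + ∑ y, ∑ x, cayP z x y * ((f y)^2/2) := by
        congr 1; exact Finset.sum_comm
    _ = (∑ x, (f x)^2/2) + ∑ y, (f y)^2/2 := by simp_rw [e1, e2]
    _ = ∑ x, (f x) ^ 2 := by
        rw [← Finset.sum_add_distrib]
        exact Finset.sum_congr rfl fun x _ => by ring

lemma char_step (χ : AddChar G ℂ) (a x : G) :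
    (χ (x + a)).re + (χ (x - a)).re = 2 * (χ a).re * (χ x).re := by
  have h1 : χ (x + a) = χ x * χ a := AddChar.map_add_eq_mul χ x a
  have h2 : χ (x - a) = χ x * (starRingEnd ℂ) (χ a) := by
    rw [sub_eq_add_neg, AddChar.map_add_eq_mul, AddChar.map_neg_eq_conj]
  rw [h1, h2]
  simp only [Complex.mul_re, Complex.conj_re, Complex.conj_im]
  ring

lemma char_mem (hk : 1 ≤ k) (χ : AddChar G ℂ) (hχ : χ ≠ 0) :
    (∑ i, (χ (z i)).re) / k ∈ {r : ℝ | ∃ f : G → ℝ, f ≠ 0 ∧ (∑ x, f x) = 0 ∧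
      r = (∑ x, ∑ y, f x * cayP z x y * f y) / (∑ x, (f x) ^ 2)} := by
  set f : G → ℝ := fun x => (χ x).re with hfdef
  have hk' : (k : ℝ) ≠ 0 := Nat.cast_ne_zero.2 (by omega)
  have hfne : f ≠ 0 := by
    intro h
    have h0 := congrFun h 0
    simp [hfdef, AddChar.map_zero_eq_one] at h0
  have hrow : ∀ x, ∑ y, cayP z x y * f y = (∑ i, (χ (z i)).re) * f x / k := by
    intro x
    rw [cayP_row]
    have h2 : ∑ i, (f (x + z i) + f (x - z i)) = (∑ i, 2 * (χ (z i)).re * f x) :=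
      Finset.sum_congr rfl fun i _ => char_step χ (z i) x
    rw [h2, ← Finset.sum_mul, ← Finset.mul_sum]
    field_simp
  have hnum : ∑ x, ∑ y, f x * cayP z x y * f y
      = (∑ i, (χ (z i)).re) / k * ∑ x, (f x)^2 := by
    have h3 : ∀ x : G, ∑ y, f x * cayP z x y * f y = f x * ∑ y, cayP z x y * f y := fun x => by
      rw [Finset.mul_sum]; exact Finset.sum_congr rfl fun y _ => by ring
    simp_rw [h3, hrow]
    rw [Finset.mul_sum]
    exact Finset.sum_congr rfl fun x _ => by ring
  refine ⟨f, hfne, ?_, ?_⟩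
  · have : ∑ x, f x = (∑ x, χ x).re := by rw [Complex.re_sum]
    rw [this, AddChar.sum_eq_zero_iff_ne_zero.2 hχ, Complex.zero_re]
  · rw [hnum, mul_div_assoc, div_self (sum_sq_pos hfne).ne', mul_one]

lemma lamTwo_lb (hk : 1 ≤ k) (χ : AddChar G ℂ) (hχ : χ ≠ 0) :
    (∑ i, (χ (z i)).re) / k ≤ lamTwo (cayP z) := by
  apply le_csSup
  · refine ⟨1, fun r hr => ?_⟩
    obtain ⟨f, hf, -, rfl⟩ := hr
    exact (div_le_one (sum_sq_pos hf)).2 (rayleigh_num_le z hk f)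
  · exact char_mem z hk χ hχ

open Real in
lemma box_bound {m : ℕ} (hm : 1 ≤ m) {θ₁ θ₂ : ℝ}
    (h₁ : -π < θ₁) (h₁' : θ₁ ≤ π) (h₂ : -π < θ₂) (h₂' : θ₂ ≤ π)
    (hb : min (m-1) ⌊(θ₁+π)*m/(2*π)⌋₊ = min (m-1) ⌊(θ₂+π)*m/(2*π)⌋₊) :
    |θ₁ - θ₂| ≤ 2*π/m := by
  have hπ := Real.pi_pos
  have hm' : (0:ℝ) < m := by exact_mod_cast hm
  have key : ∀ θ : ℝ, -π < θ → θ ≤ π →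
      ((min (m-1) ⌊(θ+π)*m/(2*π)⌋₊ : ℕ) : ℝ) ≤ (θ+π)*m/(2*π) ∧
      (θ+π)*m/(2*π) ≤ (min (m-1) ⌊(θ+π)*m/(2*π)⌋₊ : ℕ) + 1 := by
    intro θ hθ hθ'
    set s := (θ+π)*m/(2*π) with hs
    have hs0 : 0 ≤ s := by
      rw [hs]
      have : 0 ≤ θ + π := by linarith
      positivity
    constructor
    · refine le_trans ?_ (Nat.floor_le hs0)
      exact_mod_cast min_le_right (m-1) ⌊s⌋₊
    · by_cases hc : ⌊s⌋₊ ≤ m - 1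
      · rw [min_eq_right hc]
        exact (Nat.lt_floor_add_one s).le
      · rw [min_eq_left (le_of_not_ge hc)]
        have hsm : s ≤ m := by
          rw [hs, div_le_iff₀ (by positivity)]
          nlinarith
        have hcast : ((m - 1 : ℕ) : ℝ) + 1 = (m : ℝ) := by
          have h' : (m - 1 : ℕ) + 1 = m := by omega
          exact_mod_cast congrArg (Nat.cast : ℕ → ℝ) h'
        rw [hcast]
        exact hsm
  obtain ⟨l₁, u₁⟩ := key θ₁ h₁ h₁'
  obtain ⟨l₂, u₂⟩ := key θ₂ h₂ h₂'
  rw [hb] at l₁ u₁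
  have hd : |(θ₁+π)*m/(2*π) - (θ₂+π)*m/(2*π)| ≤ 1 := abs_le.2 ⟨by linarith, by linarith⟩
  have hrw : (θ₁+π)*m/(2*π) - (θ₂+π)*m/(2*π) = |θ₁ - θ₂| * (m / (2*π)) ∨
      (θ₁+π)*m/(2*π) - (θ₂+π)*m/(2*π) = -(|θ₁ - θ₂| * (m / (2*π))) := by
    rcases abs_cases (θ₁ - θ₂) with ⟨h, _⟩ | ⟨h, _⟩
    · left; rw [h]; ring
    · right; rw [h]; ring
  have hd' : |θ₁ - θ₂| * (m / (2*π)) ≤ 1 := by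
    rcases hrw with h | h <;> rw [h] at hd
    · rwa [abs_of_nonneg (by positivity)] at hd
    · rwa [abs_neg, abs_of_nonneg (by positivity)] at hd
  rw [le_div_iff₀ hm']
  have hmul := mul_le_mul_of_nonneg_right hd' (le_of_lt (by positivity : (0:ℝ) < 2*π))
  have hfs : |θ₁ - θ₂| * (m / (2*π)) * (2*π) = |θ₁ - θ₂| * m := by
    field_simp
  rw [hfs, one_mul] at hmul
  exact hmul

open Real in
lemma exists_good_char {m : ℕ} (hm : 1 ≤ m)
    (hmk : m ^ k < Fintype.card G) :
    ∃ χ : AddChar G ℂ, χ ≠ 0 ∧ ∀ i, 1 - (2*π/m)^2/2 ≤ (χ (z i)).re := by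
  have hπ := Real.pi_pos
  have hm' : (0:ℝ) < m := by exact_mod_cast hm
  let B : ℝ → Fin m := fun θ =>
    ⟨min (m-1) ⌊(θ+π)*m/(2*π)⌋₊, lt_of_le_of_lt (min_le_left _ _) (by omega)⟩
  let F : AddChar G ℂ → (Fin k → Fin m) := fun χ i => B ((χ (z i)).arg)
  have hcard : Fintype.card (Fin k → Fin m) < Fintype.card (AddChar G ℂ) := by
    rw [AddChar.card_eq]
    simpa using hmk
  obtain ⟨χ₁, χ₂, hne, heq⟩ := Fintype.exists_ne_map_eq_of_card_lt F hcard
  refine ⟨χ₁ * χ₂⁻¹, ?_, ?_⟩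
  · rw [show (0 : AddChar G ℂ) = 1 from (AddChar.one_eq_zero).symm, Ne, mul_inv_eq_one]
    exact hne
  · intro i
    have hF : B ((χ₁ (z i)).arg) = B ((χ₂ (z i)).arg) := congrFun heq i
    have hmin : min (m-1) ⌊((χ₁ (z i)).arg+π)*m/(2*π)⌋₊
        = min (m-1) ⌊((χ₂ (z i)).arg+π)*m/(2*π)⌋₊ := congrArg Fin.val hF
    set θ₁ := (χ₁ (z i)).arg
    set θ₂ := (χ₂ (z i)).arg
    have habs := box_bound hm (Complex.neg_pi_lt_arg _) (Complex.arg_le_pi _)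
      (Complex.neg_pi_lt_arg (χ₂ (z i))) (Complex.arg_le_pi _) hmin
    have hu : χ₁ (z i) = Complex.exp (θ₁ * Complex.I) := by
      conv_lhs => rw [← Complex.norm_mul_exp_arg_mul_I (χ₁ (z i))]
      have h1 : ‖χ₁ (z i)‖ = 1 := by
        exact AddChar.norm_apply _ _
      rw [h1]; simp; rfl
    have hv : χ₂ (z i) = Complex.exp (θ₂ * Complex.I) := by
      conv_lhs => rw [← Complex.norm_mul_exp_arg_mul_I (χ₂ (z i))]
      have h1 : ‖χ₂ (z i)‖ = 1 := by
        exact AddChar.norm_apply _ _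
      rw [h1]; simp; rfl
    have hval : (χ₁ * χ₂⁻¹) (z i) = Complex.exp (((θ₁ - θ₂ : ℝ) : ℂ) * Complex.I) := by
      rw [AddChar.mul_apply, AddChar.inv_apply', hu, hv, ← Complex.exp_neg, ← Complex.exp_add]
      congr 1
      push_cast
      ring
    rw [hval, Complex.exp_ofReal_mul_I_re]
    have hcos := Real.one_sub_sq_div_two_le_cos (x := θ₁ - θ₂)
    have hsq : (θ₁ - θ₂)^2 ≤ (2*π/m)^2 := by
      rw [← sq_abs (θ₁ - θ₂)]
      exact pow_le_pow_left₀ (abs_nonneg _) habs 2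
    linarith

open Real in
theorem statement6 :
    ∃ c : ℝ, 0 < c ∧
    ∀ (G : Type) [AddCommGroup G] [Fintype G] [DecidableEq G],
      2 ≤ Fintype.card G →
      ∀ k : ℕ, 1 ≤ k → ∀ z : Fin k → G,
        absSpectralGap (cayP z) ≤ spectralGap (cayP z) ∧
        spectralGap (cayP z) ≤ c⁻¹ * (Fintype.card G : ℝ) ^ (-(2 / (k : ℝ))) := by
  refine ⟨(200:ℝ)⁻¹, by norm_num, ?_⟩
  intro G _ _ _ hG k hk z
  have hπ0 := Real.pi_pos
  constructor
  · unfold absSpectralGap spectralGap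
    have h := (le_abs_self (lamTwo (cayP z))).trans (le_max_left |lamTwo (cayP z)| |lamMin (cayP z)|)
    linarith
  · have hex : ∃ m : ℕ, Fintype.card G ≤ (m+1)^k :=
      ⟨Fintype.card G, le_trans (Nat.le_succ _) (Nat.le_self_pow (by omega) _)⟩
    set m := Nat.find hex with hmdef
    have hm1 : Fintype.card G ≤ (m+1)^k := Nat.find_spec hex
    have hm0 : 1 ≤ m := by
      by_contra h
      have hm' : m = 0 := by omega
      rw [hm'] at hm1
      simp at hm1
      omega
    have hm2 : m^k < Fintype.card G := by
      have h := Nat.find_min hex (show m-1 < m by omega)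
      push_neg at h
      have h' : (m-1)+1 = m := by omega
      rwa [h'] at h
    obtain ⟨χ, hχ, hre⟩ := exists_good_char z hm0 hm2
    have hlam := lamTwo_lb z hk χ hχ
    have hk0 : (0:ℝ) < k := by exact_mod_cast hk
    have hm' : (0:ℝ) < m := by exact_mod_cast hm0
    have hμ : 1 - (2*π/m)^2/2 ≤ (∑ i, (χ (z i)).re) / k := by
      have hsum : (k:ℝ) * (1 - (2*π/m)^2/2) ≤ ∑ i, (χ (z i)).re := by
        calc (k:ℝ) * (1 - (2*π/m)^2/2) = ∑ _i : Fin k, (1 - (2*π/m)^2/2) := by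
              simp [Finset.sum_const, Finset.card_univ, mul_comm]
              ring
          _ ≤ ∑ i, (χ (z i)).re := Finset.sum_le_sum fun i _ => hre i
      rw [le_div_iff₀ hk0]
      linarith
    have hgap : spectralGap (cayP z) ≤ (2*π/m)^2/2 := by
      unfold spectralGap
      linarith
    have hn0 : (0:ℝ) < Fintype.card G := by positivity
    have hA : (0:ℝ) < (Fintype.card G : ℝ) ^ ((2:ℝ)/k) := Real.rpow_pos_of_pos hn0 _
    have hnm : (Fintype.card G : ℝ) ^ ((2:ℝ)/k) ≤ 4 * (m:ℝ)^2 := by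
      have h2m : (Fintype.card G : ℝ) ≤ (((2*m)^k : ℕ) : ℝ) := by
        exact_mod_cast hm1.trans (Nat.pow_le_pow_left (by omega) k)
      have hle := Real.rpow_le_rpow (by positivity) h2m (by positivity : (0:ℝ) ≤ 2/(k:ℝ))
      have hkne : (k:ℝ) ≠ 0 := hk0.ne'
      calc (Fintype.card G : ℝ) ^ ((2:ℝ)/k) ≤ (((2*m)^k : ℕ) : ℝ) ^ ((2:ℝ)/k) := hle
        _ = ((2*m : ℝ)) ^ ((k:ℝ) * (2/(k:ℝ))) := by
            push_cast
            rw [← Real.rpow_natCast (2*(m:ℝ)) k, ← Real.rpow_mul (by positivity)]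
        _ = ((2*m : ℝ)) ^ (2:ℝ) := by rw [mul_div_cancel₀ _ hkne]
        _ = 4 * (m:ℝ)^2 := by
            rw [show ((2:ℝ)*m)^(2:ℝ) = ((2:ℝ)*m)^(2:ℕ) from Real.rpow_natCast _ 2]
            ring
    have hfinal : (2*π/(m:ℝ))^2/2 ≤ ((200:ℝ)⁻¹)⁻¹ * (Fintype.card G : ℝ) ^ (-(2/(k:ℝ))) := by
      rw [inv_inv, Real.rpow_neg (le_of_lt hn0), ← div_eq_mul_inv, div_le_div_iff₀ two_pos hA]
      have hsq : (2*π/(m:ℝ))^2 * ((Fintype.card G : ℝ) ^ ((2:ℝ)/k))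
          ≤ (2*π/(m:ℝ))^2 * (4 * (m:ℝ)^2) := mul_le_mul_of_nonneg_left hnm (by positivity)
      have hid : (2*π/(m:ℝ))^2 * (4 * (m:ℝ)^2) = 16 * π^2 := by
        field_simp
        ring
      have hπ4 := Real.pi_le_four
      nlinarith
    exact hgap.trans hfinal
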